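/- There exist 28 equiangular lines in R^7 with common angle arccos(1/3), achieving equality in the simplex bound: 28 unit vectors u_1,...,u_28 in R^7 with (u_i·u_j)² = 1/9 for all i ≠ j, and (28−7)/(7·27) = 1/9. -/

import Mathlib

open scoped RealInnerProductSpace

noncomputable def one8 : EuclideanSpace ℝ (Fin 8) := WithLp.toLp 2 (fun _ => 1)

noncomputable def vv (a b : Fin 8) : EuclideanSpace ℝ (Fin 8) :=
  (4:ℝ) • (EuclideanSpace.single a 1 + EuclideanSpace.single b 1) - one8

lemma inner_one8_one8 : ⟪one8, one8⟫ = (8:ℝ) := by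
  simp only [one8, PiLp.inner_apply]
  simp

lemma inner_single_one8 (a : Fin 8) : ⟪EuclideanSpace.single a (1:ℝ), one8⟫ = 1 := by
  simp [EuclideanSpace.inner_single_left, one8]

lemma inner_one8_single (a : Fin 8) : ⟪one8, EuclideanSpace.single a (1:ℝ)⟫ = 1 := by
  rw [real_inner_comm]; exact inner_single_one8 a

lemma inner_single_single (a c : Fin 8) :
    ⟪EuclideanSpace.single a (1:ℝ), EuclideanSpace.single c (1:ℝ)⟫
      = if a = c then 1 else 0 := by
  simp [EuclideanSpace.inner_single_left, EuclideanSpace.single_apply, eq_comm]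

lemma inner_vv (a b c d : Fin 8) :
    ⟪vv a b, vv c d⟫ =
      16 * ((if a = c then (1:ℝ) else 0) + (if a = d then 1 else 0) +
        (if b = c then 1 else 0) + (if b = d then 1 else 0)) - 8 := by
  simp only [vv, inner_sub_left, inner_sub_right, inner_add_left, inner_add_right,
    real_inner_smul_left, real_inner_smul_right, inner_one8_one8, inner_single_one8,
    inner_one8_single, inner_single_single]
  ring

lemma inner_vv_one8 (a b : Fin 8) : ⟪one8, vv a b⟫ = 0 := by
  simp only [vv, inner_sub_right, inner_add_right, real_inner_smul_right,
    inner_one8_single, inner_one8_one8]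
  ring

noncomputable def Ksub : Submodule ℝ (EuclideanSpace ℝ (Fin 8)) := (ℝ ∙ one8)ᗮ

lemma one8_ne_zero : one8 ≠ 0 := by
  intro h
  have := congrArg (fun v : EuclideanSpace ℝ (Fin 8) => v 0) h
  simp [one8] at this

lemma finrank_Ksub : Module.finrank ℝ Ksub = 7 := by
  show Module.finrank ℝ ((ℝ ∙ one8)ᗮ : Submodule ℝ (EuclideanSpace ℝ (Fin 8))) = 7
  have h := (ℝ ∙ one8).finrank_add_finrank_orthogonal
  rw [finrank_span_singleton one8_ne_zero, finrank_euclideanSpace_fin] at h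
  omega

noncomputable def isom : Ksub ≃ₗᵢ[ℝ] EuclideanSpace ℝ (Fin 7) :=
  ((stdOrthonormalBasis ℝ Ksub).reindex (finCongr finrank_Ksub)).repr

def S : Finset (Fin 8 × Fin 8) := Finset.univ.filter (fun p => p.1 < p.2)

lemma card_S : S.card = 28 := by decide

noncomputable def pr : Fin 28 → Fin 8 × Fin 8 := fun k =>
  (S.equivFin.symm (Fin.cast card_S.symm k) : Fin 8 × Fin 8)

lemma pr_mem (k : Fin 28) : (pr k).1 < (pr k).2 := by
  have h := (S.equivFin.symm (Fin.cast card_S.symm k)).2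
  simp only [S, Finset.mem_filter] at h
  exact h.2

lemma pr_inj : Function.Injective pr := by
  intro i j h
  have := S.equivFin.symm.injective (Subtype.ext h)
  exact Fin.ext (congrArg Fin.val this)

lemma vv_mem (a b : Fin 8) : vv a b ∈ Ksub :=
  Submodule.mem_orthogonal_singleton_iff_inner_right.mpr (inner_vv_one8 a b)

lemma inner_vv_cases {a b c d : Fin 8} (hab : a < b) (hcd : c < d)
    (hne : (a, b) ≠ (c, d)) : ⟪vv a b, vv c d⟫ = 8 ∨ ⟪vv a b, vv c d⟫ = -8 := by
  rw [inner_vv]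
  have h1 : ¬(a = c ∧ b = d) := by rintro ⟨rfl, rfl⟩; exact hne rfl
  rw [Fin.lt_def] at hab hcd
  split_ifs with h2 h3 h4 h5 <;>
    simp_all [Fin.ext_iff] <;> first | omega | norm_num

lemma inner_vv_self {a b : Fin 8} (hab : a < b) : ⟪vv a b, vv a b⟫ = 24 := by
  rw [inner_vv]
  have : a ≠ b := hab.ne
  simp [this, this.symm]
  ring

lemma norm_vv {a b : Fin 8} (hab : a < b) : ‖vv a b‖ = Real.sqrt 24 := by
  rw [norm_eq_sqrt_real_inner, inner_vv_self hab]

noncomputable def uu : Fin 28 → EuclideanSpace ℝ (Fin 7) := fun k =>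
  (Real.sqrt 24)⁻¹ • isom ⟨vv (pr k).1 (pr k).2, vv_mem _ _⟩

lemma sqrt24_pos : (0:ℝ) < Real.sqrt 24 := Real.sqrt_pos.mpr (by norm_num)

lemma norm_uu (k : Fin 28) : ‖uu k‖ = 1 := by
  rw [uu, norm_smul, LinearIsometryEquiv.norm_map]
  rw [show ‖(⟨vv (pr k).1 (pr k).2, vv_mem _ _⟩ : Ksub)‖ = ‖vv (pr k).1 (pr k).2‖ from rfl,
    norm_vv (pr_mem k)]
  rw [Real.norm_eq_abs, abs_of_pos (inv_pos.mpr sqrt24_pos)]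
  exact inv_mul_cancel₀ sqrt24_pos.ne'

lemma inner_uu (i j : Fin 28) :
    ⟪uu i, uu j⟫ = 24⁻¹ * ⟪vv (pr i).1 (pr i).2, vv (pr j).1 (pr j).2⟫ := by
  rw [uu, uu, real_inner_smul_left, real_inner_smul_right,
    LinearIsometryEquiv.inner_map_map]
  rw [show (⟪(⟨vv (pr i).1 (pr i).2, vv_mem _ _⟩ : Ksub),
      (⟨vv (pr j).1 (pr j).2, vv_mem _ _⟩ : Ksub)⟫ : ℝ)
      = ⟪vv (pr i).1 (pr i).2, vv (pr j).1 (pr j).2⟫ from rfl]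
  have : (Real.sqrt 24)⁻¹ * (Real.sqrt 24)⁻¹ = 24⁻¹ := by
    rw [← mul_inv, Real.mul_self_sqrt (by norm_num)]
  rw [← mul_assoc, this]

/-- There exist 28 equiangular lines in `ℝ⁷` with common angle `arccos (1/3)`:
28 unit vectors with `⟪u i, u j⟫² = 1/9` for all `i ≠ j`, achieving equality in the
simplex bound `(28-7)/(7·27) = 1/9`. -/
theorem equiangular_28_lines_in_R7 :
    ∃ u : Fin 28 → EuclideanSpace ℝ (Fin 7),
      (∀ i, ‖u i‖ = 1) ∧
      (∀ i j, i ≠ j → ⟪u i, u j⟫ ^ 2 = 1 / 9) ∧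
      ((28 : ℝ) - 7) / (7 * ((28 : ℝ) - 1)) = 1 / 9 := by
  refine ⟨uu, norm_uu, ?_, by norm_num⟩
  intro i j hij
  rw [inner_uu]
  have hne : ((pr i).1, (pr i).2) ≠ ((pr j).1, (pr j).2) :=
    fun h => hij (pr_inj (by simpa [Prod.ext_iff] using h))
  rcases inner_vv_cases (pr_mem i) (pr_mem j) hne with h | h <;> rw [h] <;> norm_num
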